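/- Let N ≥ 1, let Ω ⊆ ℝ^N be a measurable set equipped with a finite measure, let ψ : ℝ^N → [0,∞) be measurable with ψ(−z) = ψ(z) for all z, and let x ↦ ν_x be a measurable family (Markov kernel) of probability measures on [0,∞) × ℝ^N indexed by x ∈ Ω. Define ρ(x) = ∫ s dν_x(s,v), m(x) = ∫ s v dν_x(s,v) ∈ ℝ^N and e(x) = ∫ s|v|² dν_x(s,v), and assume the functions (x,y) ↦ ψ(x−y) e(x) ρ(y), (x,y) ↦ ψ(x−y) |m(x)| |m(y)| and (x,y) ↦ ψ(x−y) ρ(x) e(y) are integrable on Ω × Ω. Then ∫_Ω ∫_Ω ( e(x) ρ(y) − m(x) · m(y) ) ψ(x−y) dy dx ≥ 0. -/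

import Mathlib

open MeasureTheory

/-- For a finite measure on a measurable `Ω ⊆ ℝ^N`, a symmetric nonnegative
measurable `ψ`, and a Markov kernel `x ↦ ν_x` of probability measures on `[0,∞) × ℝ^N`
with moments `ρ(x) = ∫ s dν_x`, `m(x) = ∫ sv dν_x`, `e(x) = ∫ s|v|² dν_x`, under the stated
integrability assumptions, `∫_Ω ∫_Ω (e(x)ρ(y) − m(x)·m(y)) ψ(x−y) dy dx ≥ 0`. -/
theorem stmt1 (N : ℕ) (hN : 1 ≤ N)
    (Ω : Set (EuclideanSpace ℝ (Fin N))) (hΩ : MeasurableSet Ω)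
    (μ : Measure (EuclideanSpace ℝ (Fin N))) [IsFiniteMeasure μ]
    (ψ : EuclideanSpace ℝ (Fin N) → ℝ) (hψmeas : Measurable ψ)
    (hψnn : ∀ z, 0 ≤ ψ z) (hψsymm : ∀ z, ψ (-z) = ψ z)
    (ν : ProbabilityTheory.Kernel (EuclideanSpace ℝ (Fin N))
      (ℝ × EuclideanSpace ℝ (Fin N)))
    [ProbabilityTheory.IsMarkovKernel ν]
    (hsupp : ∀ x, ∀ᵐ q ∂(ν x), 0 ≤ q.1)
    (hνint1 : ∀ x, Integrable (fun q : ℝ × EuclideanSpace ℝ (Fin N) => q.1) (ν x))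
    (hνint2 : ∀ x, Integrable (fun q : ℝ × EuclideanSpace ℝ (Fin N) => q.1 • q.2) (ν x))
    (hνint3 : ∀ x, Integrable (fun q : ℝ × EuclideanSpace ℝ (Fin N) => q.1 * ‖q.2‖ ^ 2) (ν x))
    (ρ : EuclideanSpace ℝ (Fin N) → ℝ)
    (m : EuclideanSpace ℝ (Fin N) → EuclideanSpace ℝ (Fin N))
    (e : EuclideanSpace ℝ (Fin N) → ℝ)
    (hρ : ∀ x, ρ x = ∫ q, q.1 ∂(ν x))
    (hm : ∀ x, m x = ∫ q, q.1 • q.2 ∂(ν x))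
    (he : ∀ x, e x = ∫ q, q.1 * ‖q.2‖ ^ 2 ∂(ν x))
    (hint1 : IntegrableOn
      (fun q : EuclideanSpace ℝ (Fin N) × EuclideanSpace ℝ (Fin N) =>
        ψ (q.1 - q.2) * e q.1 * ρ q.2) (Ω ×ˢ Ω) (μ.prod μ))
    (hint2 : IntegrableOn
      (fun q : EuclideanSpace ℝ (Fin N) × EuclideanSpace ℝ (Fin N) =>
        ψ (q.1 - q.2) * ‖m q.1‖ * ‖m q.2‖) (Ω ×ˢ Ω) (μ.prod μ))
    (hint3 : IntegrableOn
      (fun q : EuclideanSpace ℝ (Fin N) × EuclideanSpace ℝ (Fin N) =>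
        ψ (q.1 - q.2) * ρ q.1 * e q.2) (Ω ×ˢ Ω) (μ.prod μ)) :
    0 ≤ ∫ x in Ω, ∫ y in Ω, (e x * ρ y - (inner ℝ (m x) (m y) : ℝ)) * ψ (x - y) ∂μ ∂μ := by
  classical
  -- nonnegativity of ρ and e
  have hρnn : ∀ x, 0 ≤ ρ x := by
    intro x; rw [hρ x]
    exact integral_nonneg_of_ae (hsupp x)
  have henn : ∀ x, 0 ≤ e x := by
    intro x; rw [he x]
    refine integral_nonneg_of_ae ?_
    filter_upwards [hsupp x] with q hq
    positivity
  -- measurability of ρ, m, e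
  have hρmeas : StronglyMeasurable ρ := by
    have : StronglyMeasurable fun x : EuclideanSpace ℝ (Fin N) =>
        ∫ q, (fun p : EuclideanSpace ℝ (Fin N) × (ℝ × EuclideanSpace ℝ (Fin N)) => p.2.1) (x, q)
          ∂ν x :=
      (measurable_snd.fst.stronglyMeasurable).integral_kernel_prod_right'
    simpa [funext hρ] using this
  have hmmeas : StronglyMeasurable m := by
    have : StronglyMeasurable fun x : EuclideanSpace ℝ (Fin N) =>
        ∫ q, (fun p : EuclideanSpace ℝ (Fin N) × (ℝ × EuclideanSpace ℝ (Fin N)) =>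
          p.2.1 • p.2.2) (x, q) ∂ν x :=
      ((measurable_snd.fst.smul measurable_snd.snd).stronglyMeasurable).integral_kernel_prod_right'
    simpa [funext hm] using this
  have hemeas : StronglyMeasurable e := by
    have : StronglyMeasurable fun x : EuclideanSpace ℝ (Fin N) =>
        ∫ q, (fun p : EuclideanSpace ℝ (Fin N) × (ℝ × EuclideanSpace ℝ (Fin N)) =>
          p.2.1 * ‖p.2.2‖ ^ 2) (x, q) ∂ν x :=
      ((measurable_snd.fst.mul (measurable_snd.snd.norm.pow measurable_const)).stronglyMeasurable).integral_kernel_prod_right'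
    simpa [funext he] using this
  -- key pointwise inequality: ‖m x‖² ≤ ρ x * e x
  have hkey : ∀ x, ‖m x‖ ^ 2 ≤ ρ x * e x := by
    intro x
    have habs1 : Integrable (fun q : ℝ × EuclideanSpace ℝ (Fin N) => |q.1|) (ν x) :=
      (hνint1 x).abs
    have habs3 : Integrable (fun q : ℝ × EuclideanSpace ℝ (Fin N) => |q.1| * ‖q.2‖ ^ 2) (ν x) := by
      have := (hνint3 x).abs
      refine this.congr (Filter.Eventually.of_forall fun q => ?_)
      show |q.1 * ‖q.2‖ ^ 2| = |q.1| * ‖q.2‖ ^ 2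
      rw [abs_mul, abs_of_nonneg (by positivity : (0:ℝ) ≤ ‖q.2‖ ^ 2)]
    have hpq : Real.HolderConjugate 2 2 := Real.holderConjugate_iff.mpr ⟨by norm_num, by norm_num⟩
    have hf : MemLp (fun q : ℝ × EuclideanSpace ℝ (Fin N) => Real.sqrt |q.1|)
        (ENNReal.ofReal 2) (ν x) := by
      rw [(by norm_num : ENNReal.ofReal (2:ℝ) = 2),
        memLp_two_iff_integrable_sq
          ((measurable_fst.abs.sqrt).aestronglyMeasurable)]
      refine habs1.congr (Filter.Eventually.of_forall fun q => ?_)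
      show |q.1| = Real.sqrt |q.1| ^ 2
      rw [Real.sq_sqrt (abs_nonneg _)]
    have hg : MemLp (fun q : ℝ × EuclideanSpace ℝ (Fin N) => Real.sqrt |q.1| * ‖q.2‖)
        (ENNReal.ofReal 2) (ν x) := by
      rw [(by norm_num : ENNReal.ofReal (2:ℝ) = 2),
        memLp_two_iff_integrable_sq
          (f := fun q : ℝ × EuclideanSpace ℝ (Fin N) => Real.sqrt |q.1| * ‖q.2‖)
          ((measurable_fst.abs.sqrt.mul measurable_snd.norm).aestronglyMeasurable)]
      refine habs3.congr (Filter.Eventually.of_forall fun q => ?_)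
      show |q.1| * ‖q.2‖ ^ 2 = (Real.sqrt |q.1| * ‖q.2‖) ^ 2
      rw [mul_pow, Real.sq_sqrt (abs_nonneg _)]
    have hCS := integral_mul_le_Lp_mul_Lq_of_nonneg hpq
      (Filter.Eventually.of_forall fun q => Real.sqrt_nonneg _)
      (Filter.Eventually.of_forall fun q => by positivity) hf hg
    have hL : (∫ q, Real.sqrt |q.1| * (Real.sqrt |q.1| * ‖q.2‖) ∂ν x)
        = ∫ q, |q.1| * ‖q.2‖ ∂ν x := by
      refine integral_congr_ae (Filter.Eventually.of_forall fun q => ?_)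
      show Real.sqrt |q.1| * (Real.sqrt |q.1| * ‖q.2‖) = |q.1| * ‖q.2‖
      rw [← mul_assoc, Real.mul_self_sqrt (abs_nonneg _)]
    have hR1 : (∫ q, Real.sqrt |q.1| ^ (2:ℝ) ∂ν x) = ρ x := by
      rw [hρ x]
      refine integral_congr_ae ?_
      filter_upwards [hsupp x] with q hq
      rw [Real.rpow_two, Real.sq_sqrt (abs_nonneg _), abs_of_nonneg hq]
    have hR2 : (∫ q, (Real.sqrt |q.1| * ‖q.2‖) ^ (2:ℝ) ∂ν x) = e x := by
      rw [he x]
      refine integral_congr_ae ?_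
      filter_upwards [hsupp x] with q hq
      rw [Real.rpow_two, mul_pow, Real.sq_sqrt (abs_nonneg _), abs_of_nonneg hq]
    rw [hL, hR1, hR2] at hCS
    -- ‖m x‖ ≤ ∫ |s| ‖v‖
    have hnorm : ‖m x‖ ≤ ∫ q, |q.1| * ‖q.2‖ ∂ν x := by
      rw [hm x]
      refine (norm_integral_le_integral_norm _).trans_eq ?_
      refine integral_congr_ae (Filter.Eventually.of_forall fun q => ?_)
      show ‖q.1 • q.2‖ = |q.1| * ‖q.2‖
      rw [norm_smul, Real.norm_eq_abs]
    have h2 : ‖m x‖ ≤ Real.sqrt (ρ x) * Real.sqrt (e x) := by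
      rw [Real.sqrt_eq_rpow, Real.sqrt_eq_rpow]
      exact hnorm.trans hCS
    nlinarith [Real.sq_sqrt (hρnn x), Real.sq_sqrt (henn x), Real.sqrt_nonneg (ρ x),
      Real.sqrt_nonneg (e x), norm_nonneg (m x)]
  -- pointwise symmetrized inequality
  have hkey2 : ∀ x y, 2 * (inner ℝ (m x) (m y) : ℝ) ≤ e x * ρ y + ρ x * e y := by
    intro x y
    have h1 : (inner ℝ (m x) (m y) : ℝ) ≤ ‖m x‖ * ‖m y‖ := real_inner_le_norm _ _
    have hx : ‖m x‖ ≤ Real.sqrt (ρ x * e x) := by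
      nlinarith [Real.sqrt_nonneg (ρ x * e x), norm_nonneg (m x), hkey x,
        Real.sq_sqrt (mul_nonneg (hρnn x) (henn x))]
    have hy : ‖m y‖ ≤ Real.sqrt (ρ y * e y) := by
      nlinarith [Real.sqrt_nonneg (ρ y * e y), norm_nonneg (m y), hkey y,
        Real.sq_sqrt (mul_nonneg (hρnn y) (henn y))]
    have hprod : Real.sqrt (ρ x * e x) * Real.sqrt (ρ y * e y)
        = Real.sqrt (e x * ρ y) * Real.sqrt (ρ x * e y) := by
      rw [← Real.sqrt_mul (mul_nonneg (hρnn x) (henn x)),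
        ← Real.sqrt_mul (mul_nonneg (henn x) (hρnn y))]
      ring_nf
    have hAM : 2 * (Real.sqrt (e x * ρ y) * Real.sqrt (ρ x * e y))
        ≤ e x * ρ y + ρ x * e y := by
      nlinarith [sq_nonneg (Real.sqrt (e x * ρ y) - Real.sqrt (ρ x * e y)),
        Real.sq_sqrt (mul_nonneg (henn x) (hρnn y)),
        Real.sq_sqrt (mul_nonneg (hρnn x) (henn y))]
    nlinarith [Real.sqrt_nonneg (ρ x * e x), Real.sqrt_nonneg (ρ y * e y),
      norm_nonneg (m x), norm_nonneg (m y)]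
  -- set up the product measure
  set π := (μ.restrict Ω).prod (μ.restrict Ω) with hπ
  have hπeq : π = (μ.prod μ).restrict (Ω ×ˢ Ω) := Measure.prod_restrict Ω Ω
  set f : EuclideanSpace ℝ (Fin N) × EuclideanSpace ℝ (Fin N) → ℝ :=
    fun p => (e p.1 * ρ p.2 - (inner ℝ (m p.1) (m p.2) : ℝ)) * ψ (p.1 - p.2) with hf
  -- integrability of f
  have hg2meas : AEStronglyMeasurable
      (fun p : EuclideanSpace ℝ (Fin N) × EuclideanSpace ℝ (Fin N) =>
        (inner ℝ (m p.1) (m p.2) : ℝ) * ψ (p.1 - p.2)) π := by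
    have hinner : Measurable fun p : EuclideanSpace ℝ (Fin N) × EuclideanSpace ℝ (Fin N) =>
        (inner ℝ (m p.1) (m p.2) : ℝ) :=
      Measurable.inner (𝕜 := ℝ) (E := EuclideanSpace ℝ (Fin N)) (hmmeas.measurable.comp measurable_fst)
        (hmmeas.measurable.comp measurable_snd)
    exact (hinner.mul (hψmeas.comp (measurable_fst.sub measurable_snd))).aestronglyMeasurable
  have hg2int : Integrable
      (fun p : EuclideanSpace ℝ (Fin N) × EuclideanSpace ℝ (Fin N) =>
        (inner ℝ (m p.1) (m p.2) : ℝ) * ψ (p.1 - p.2)) π := by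
    rw [hπeq]
    refine Integrable.mono' hint2 (hπeq ▸ hg2meas) ?_
    filter_upwards with p
    rw [Real.norm_eq_abs, abs_mul, abs_of_nonneg (hψnn _)]
    calc |(inner ℝ (m p.1) (m p.2) : ℝ)| * ψ (p.1 - p.2)
        ≤ ‖m p.1‖ * ‖m p.2‖ * ψ (p.1 - p.2) := by
          exact mul_le_mul_of_nonneg_right (abs_real_inner_le_norm _ _) (hψnn _)
      _ = ψ (p.1 - p.2) * ‖m p.1‖ * ‖m p.2‖ := by ring
  have hg1int : Integrable
      (fun p : EuclideanSpace ℝ (Fin N) × EuclideanSpace ℝ (Fin N) =>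
        ψ (p.1 - p.2) * e p.1 * ρ p.2) π := by
    rw [hπeq]; exact hint1
  have hfint : Integrable f π := by
    have := hg1int.sub hg2int
    refine this.congr (Filter.Eventually.of_forall fun p => ?_)
    show ψ (p.1 - p.2) * e p.1 * ρ p.2 - (inner ℝ (m p.1) (m p.2) : ℝ) * ψ (p.1 - p.2) = f p
    rw [hf]; ring
  -- rewrite the iterated integral as a product integral
  have hiter : (∫ x in Ω, ∫ y in Ω, (e x * ρ y - (inner ℝ (m x) (m y) : ℝ)) * ψ (x - y) ∂μ ∂μ)
      = ∫ p, f p ∂π := by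
    rw [hπ]
    exact (MeasureTheory.integral_integral hfint)
  -- symmetry under swap
  have hswapint : Integrable (fun p => f p.swap) π := hfint.swap
  have hswap : ∫ p, f p.swap ∂π = ∫ p, f p ∂π := integral_prod_swap f
  -- pointwise nonnegativity of the symmetrized integrand
  have hptwise : ∀ p : EuclideanSpace ℝ (Fin N) × EuclideanSpace ℝ (Fin N),
      0 ≤ f p + f p.swap := by
    intro p
    have hsym : ψ (p.2 - p.1) = ψ (p.1 - p.2) := by
      rw [show p.2 - p.1 = -(p.1 - p.2) by abel, hψsymm]
    have hic : (inner ℝ (m p.2) (m p.1) : ℝ) = (inner ℝ (m p.1) (m p.2) : ℝ) :=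
      real_inner_comm _ _
    have h2 := hkey2 p.1 p.2
    have hψp := hψnn (p.1 - p.2)
    show 0 ≤ (e p.1 * ρ p.2 - (inner ℝ (m p.1) (m p.2) : ℝ)) * ψ (p.1 - p.2)
        + (e p.2 * ρ p.1 - (inner ℝ (m p.2) (m p.1) : ℝ)) * ψ (p.2 - p.1)
    rw [hsym, hic]
    nlinarith [hψp, h2]
  have hsum : 0 ≤ ∫ p, (f p + f p.swap) ∂π := integral_nonneg hptwise
  rw [integral_add hfint hswapint, hswap] at hsum
  rw [hiter]
  linarith
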